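/- Let d ≥ 1. The following are equivalent: (i) every bilipschitz map f : ℤ^d → ℝ^d extends to a bilipschitz map F : ℝ^d → ℝ^d; (ii) for every separated net A of ℝ^d, every bilipschitz map f : A → ℝ^d extends to a bilipschitz map F : ℝ^d → ℝ^d. Moreover, if (i) holds with bilip(F) ≤ C_d(bilip(f)) for a monotone increasing function C_d : [1,∞) → [1,∞), then (ii) holds with bilip(F) ≤ K·C_d(24√d·R²·K³·bilip(f)), where K := 16·max{3d/r, 1} and r, R are the separation and net constants of A. -/

import Mathlib

/-- `f` is `L`-bilipschitz on the set `s`. -/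
def IsBilipOn {α β : Type*} [PseudoMetricSpace α] [PseudoMetricSpace β]
    (L : ℝ) (f : α → β) (s : Set α) : Prop :=
  ∀ x ∈ s, ∀ y ∈ s, L⁻¹ * dist x y ≤ dist (f x) (f y) ∧ dist (f x) (f y) ≤ L * dist x y

/-- The integer lattice `ℤ^d` inside `ℝ^d`. -/
def intLattice (d : ℕ) : Set (EuclideanSpace ℝ (Fin d)) :=
  {x | ∀ i, ∃ z : ℤ, x i = z}

/-- Every bilipschitz map of `A` into `ℝ^d` admits a bilipschitz extension to `ℝ^d`. -/
def ExtProp (d : ℕ) (A : Set (EuclideanSpace ℝ (Fin d))) : Prop :=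
  ∀ f : EuclideanSpace ℝ (Fin d) → EuclideanSpace ℝ (Fin d),
    (∃ L : ℝ, 1 ≤ L ∧ IsBilipOn L f A) →
    ∃ F : EuclideanSpace ℝ (Fin d) → EuclideanSpace ℝ (Fin d),
      Function.Bijective F ∧ (∃ L : ℝ, 1 ≤ L ∧ IsBilipOn L F Set.univ) ∧ Set.EqOn F f A

noncomputable section
open Set

lemma bilip_mono {α β : Type*} [PseudoMetricSpace α] [PseudoMetricSpace β]
    {L L' : ℝ} {f : α → β} {s : Set α} (h : IsBilipOn L f s) (hL : 0 < L) (hLL : L ≤ L') :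
    IsBilipOn L' f s := by
  intro x hx y hy
  obtain ⟨h1, h2⟩ := h x hx y hy
  constructor
  · refine le_trans ?_ h1
    have hi : L'⁻¹ ≤ L⁻¹ := by
      apply inv_anti₀ hL hLL
    exact mul_le_mul_of_nonneg_right hi dist_nonneg
  · refine le_trans h2 ?_
    have : (0:ℝ) ≤ dist x y := dist_nonneg
    nlinarith

lemma bilip_comp {α β γ : Type*} [PseudoMetricSpace α] [PseudoMetricSpace β] [PseudoMetricSpace γ]
    {L1 L2 : ℝ} {g : β → γ} {f : α → β} (hg : IsBilipOn L1 g Set.univ)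
    (hf : IsBilipOn L2 f Set.univ) (h1 : 0 < L1) (h2 : 0 < L2) :
    IsBilipOn (L1 * L2) (g ∘ f) Set.univ := by
  intro x _ y _
  obtain ⟨ha1, ha2⟩ := hf x trivial y trivial
  obtain ⟨hb1, hb2⟩ := hg (f x) trivial (f y) trivial
  constructor
  · calc (L1 * L2)⁻¹ * dist x y = L1⁻¹ * (L2⁻¹ * dist x y) := by rw [mul_inv, mul_assoc]
      _ ≤ L1⁻¹ * dist (f x) (f y) := by gcongr <;> positivity
      _ ≤ dist (g (f x)) (g (f y)) := hb1
  · calc dist (g (f x)) (g (f y)) ≤ L1 * dist (f x) (f y) := hb2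
      _ ≤ L1 * (L2 * dist x y) := by gcongr
      _ = L1 * L2 * dist x y := by ring

/-- coordinatewise rounding -/
def latRound {d : ℕ} (x : EuclideanSpace ℝ (Fin d)) : EuclideanSpace ℝ (Fin d) :=
  WithLp.toLp 2 (fun i => ((round (x i) : ℤ) : ℝ))

lemma latRound_mem {d : ℕ} (x : EuclideanSpace ℝ (Fin d)) : latRound x ∈ intLattice d :=
  fun i => ⟨round (x i), rfl⟩

lemma dist_latRound_le {d : ℕ} (x : EuclideanSpace ℝ (Fin d)) :
    dist x (latRound x) ≤ Real.sqrt d / 2 := by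
  rw [EuclideanSpace.dist_eq]
  have h1 : ∀ i, dist (x i) (latRound x i) ^ 2 ≤ (1/2 : ℝ)^2 := by
    intro i
    have : |x i - (round (x i) : ℤ)| ≤ 1/2 := abs_sub_round (x i)
    have hd : dist (x i) (latRound x i) ≤ 1/2 := by
      simpa [latRound, Real.dist_eq] using this
    have h0 : (0:ℝ) ≤ dist (x i) (latRound x i) := dist_nonneg
    nlinarith
  have h2 : (∑ i, dist (x i) (latRound x i) ^ 2) ≤ (d : ℝ) * (1/2)^2 := by
    calc (∑ i, dist (x i) (latRound x i) ^ 2) ≤ ∑ _i : Fin d, (1/2:ℝ)^2 :=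
        Finset.sum_le_sum (fun i _ => h1 i)
      _ = (d : ℝ) * (1/2)^2 := by simp [Finset.sum_const, mul_comm]
  calc Real.sqrt (∑ i, dist (x i) (latRound x i) ^ 2) ≤ Real.sqrt ((d:ℝ) * (1/2)^2) :=
      Real.sqrt_le_sqrt h2
    _ = Real.sqrt d / 2 := by
      rw [Real.sqrt_mul (by positivity), Real.sqrt_sq (by norm_num : (0:ℝ) ≤ 1/2)]
      ring

lemma lattice_one_le_dist {d : ℕ} {x y : EuclideanSpace ℝ (Fin d)}
    (hx : x ∈ intLattice d) (hy : y ∈ intLattice d) (hxy : x ≠ y) : 1 ≤ dist x y := by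
  have : ∃ i, x i ≠ y i := by
    by_contra h
    push_neg at h
    exact hxy (PiLp.ext h)
  obtain ⟨i, hi⟩ := this
  obtain ⟨m, hm⟩ := hx i
  obtain ⟨n, hn⟩ := hy i
  have h1 : (1:ℝ) ≤ dist (x i) (y i) := by
    rw [Real.dist_eq, hm, hn]
    have : m ≠ n := by rintro rfl; exact hi (by rw [hm, hn])
    have := Int.one_le_abs (sub_ne_zero.2 this)
    calc (1:ℝ) = ((1:ℤ):ℝ) := by norm_num
      _ ≤ ((|m - n| : ℤ) : ℝ) := by exact_mod_cast this
      _ = |((m:ℝ) - n)| := by push_cast; ring_nf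
  calc (1:ℝ) ≤ dist (x i) (y i) := h1
    _ ≤ dist x y := by
        rw [EuclideanSpace.dist_eq]
        have : dist (x i) (y i) ^2 ≤ ∑ j, dist (x j) (y j) ^ 2 :=
          Finset.single_le_sum (f := fun j => dist (x j) (y j)^2) (fun j _ => sq_nonneg _) (Finset.mem_univ i)
        calc dist (x i) (y i) = Real.sqrt (dist (x i) (y i) ^ 2) :=
            (Real.sqrt_sq dist_nonneg).symm
          _ ≤ _ := Real.sqrt_le_sqrt this

variable {d : ℕ}

open Classical in
/-- Displacement field moving each point of `S` to `latRound` of itself. -/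
def bump (σ : ℝ) (S : Set (EuclideanSpace ℝ (Fin d))) (x : EuclideanSpace ℝ (Fin d)) :
    EuclideanSpace ℝ (Fin d) :=
  if h : ∃ a ∈ S, dist x a < σ/2 then
    (1 - dist x h.choose / (σ/2)) • (latRound h.choose - h.choose)
  else 0

section Bump

variable {σ : ℝ} {S : Set (EuclideanSpace ℝ (Fin d))}

lemma ball_uniq (hsep : ∀ a ∈ S, ∀ b ∈ S, a ≠ b → σ ≤ dist a b) {x a b : EuclideanSpace ℝ (Fin d)} (ha : a ∈ S) (hb : b ∈ S)
    (hxa : dist x a < σ/2) (hxb : dist x b < σ/2) : a = b := by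
  by_contra hne
  have h := hsep a ha b hb hne
  have := dist_triangle a x b
  rw [dist_comm a x] at this
  linarith

lemma bump_eq (hsep : ∀ a ∈ S, ∀ b ∈ S, a ≠ b → σ ≤ dist a b) {x a : EuclideanSpace ℝ (Fin d)} (ha : a ∈ S) (hxa : dist x a < σ/2) :
    bump σ S x = (1 - dist x a / (σ/2)) • (latRound a - a) := by
  have h : ∃ a ∈ S, dist x a < σ/2 := ⟨a, ha, hxa⟩
  rw [bump, dif_pos h]
  obtain ⟨hm, hdd⟩ := h.choose_spec
  rw [ball_uniq hsep hm ha hdd hxa]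

lemma bump_zero {x : EuclideanSpace ℝ (Fin d)} (hx : ¬ ∃ a ∈ S, dist x a < σ/2) :
    bump σ S x = 0 := by rw [bump, dif_neg hx]

lemma bump_norm_le (hσ : 0 < σ) (hsep : ∀ a ∈ S, ∀ b ∈ S, a ≠ b → σ ≤ dist a b)
    (hv : ∀ a ∈ S, ‖latRound a - a‖ ≤ σ/6) {x a : EuclideanSpace ℝ (Fin d)} (ha : a ∈ S) (hxa : dist x a < σ/2) :
    ‖bump σ S x‖ ≤ (σ/2 - dist x a) / 3 := by
  rw [bump_eq hsep ha hxa, norm_smul]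
  have h1 : |1 - dist x a / (σ/2)| = 1 - dist x a / (σ/2) := by
    rw [abs_of_nonneg]
    have : dist x a / (σ/2) < 1 := by
      rw [div_lt_one (by linarith)]
      exact hxa
    linarith
  rw [Real.norm_eq_abs, h1]
  have h2 := hv a ha
  have h3 : (0:ℝ) ≤ 1 - dist x a / (σ/2) := by
    have : dist x a / (σ/2) < 1 := by
      rw [div_lt_one (by linarith)]; exact hxa
    linarith
  calc (1 - dist x a / (σ/2)) * ‖latRound a - a‖ ≤ (1 - dist x a / (σ/2)) * (σ/6) :=
      mul_le_mul_of_nonneg_left h2 h3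
    _ = (σ/2 - dist x a) / 3 := by
      have hσ' : σ ≠ 0 := ne_of_gt hσ
      field_simp
      ring

lemma bump_lip (hσ : 0 < σ) (hsep : ∀ a ∈ S, ∀ b ∈ S, a ≠ b → σ ≤ dist a b)
    (hv : ∀ a ∈ S, ‖latRound a - a‖ ≤ σ/6) (x y : EuclideanSpace ℝ (Fin d)) :
    ‖bump σ S x - bump σ S y‖ ≤ (1/3) * dist x y := by
  by_cases hx : ∃ a ∈ S, dist x a < σ/2
  · obtain ⟨a, ha, hxa⟩ := hx
    by_cases hy : ∃ b ∈ S, dist y b < σ/2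
    · obtain ⟨b, hb, hyb⟩ := hy
      by_cases hab : a = b
      · subst hab
        rw [bump_eq hsep ha hxa, bump_eq hsep ha hyb, ← sub_smul, norm_smul]
        have h2 := hv a ha
        have harg0 : (1 - dist x a / (σ/2)) - (1 - dist y a / (σ/2)) =
            (dist y a - dist x a)/(σ/2) := by ring
        have harg : |(1 - dist x a / (σ/2)) - (1 - dist y a / (σ/2))| =
            |dist y a - dist x a| / (σ/2) := by
          rw [harg0, abs_div, abs_of_pos (show (0:ℝ) < σ/2 by linarith)]
        rw [Real.norm_eq_abs, harg]
        have h3 : |dist y a - dist x a| ≤ dist x y := by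
          have := abs_dist_sub_le y x a
          rwa [dist_comm y x] at this
        have h0 : ‖latRound a - a‖ ≥ 0 := norm_nonneg _
        calc |dist y a - dist x a| / (σ/2) * ‖latRound a - a‖
            ≤ dist x y / (σ/2) * (σ/6) := by
              apply mul_le_mul _ h2 h0 (by positivity)
              apply div_le_div_of_nonneg_right h3 (by linarith) |>.trans_eq rfl
          _ ≤ (1/3) * dist x y := by
              rw [div_mul_eq_mul_div, mul_comm]
              rw [div_le_iff₀ (by linarith : (0:ℝ) < σ/2)]
              ring_nf
              nlinarith [dist_nonneg (x := x) (y := y)]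
      · -- different balls
        have hbx := bump_norm_le hσ hsep hv ha hxa
        have hby := bump_norm_le hσ hsep hv hb hyb
        have hd : σ ≤ dist a b := hsep a ha b hb hab
        have htri : dist a b ≤ dist x a + dist x y + dist y b := by
          have t1 := dist_triangle a x b
          have t2 := dist_triangle x y b
          have e1 : dist a x = dist x a := dist_comm a x
          linarith
        calc ‖bump σ S x - bump σ S y‖ ≤ ‖bump σ S x‖ + ‖bump σ S y‖ := norm_sub_le _ _
          _ ≤ (σ/2 - dist x a)/3 + (σ/2 - dist y b)/3 := by linarith
          _ ≤ (1/3) * dist x y := by linarith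
    · rw [bump_zero hy, sub_zero]
      push_neg at hy
      have hya := hy a ha
      have hbx := bump_norm_le hσ hsep hv ha hxa
      have : dist y a ≤ dist y x + dist x a := dist_triangle y x a
      rw [dist_comm y x] at this
      calc ‖bump σ S x‖ ≤ (σ/2 - dist x a)/3 := hbx
        _ ≤ (1/3) * dist x y := by linarith
  · rw [bump_zero hx]
    by_cases hy : ∃ b ∈ S, dist y b < σ/2
    · obtain ⟨b, hb, hyb⟩ := hy
      push_neg at hx
      have hxb := hx b hb
      have hby := bump_norm_le hσ hsep hv hb hyb
      have : dist x b ≤ dist x y + dist y b := dist_triangle x y b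
      calc ‖0 - bump σ S y‖ = ‖bump σ S y‖ := by rw [zero_sub, norm_neg]
        _ ≤ (σ/2 - dist y b)/3 := hby
        _ ≤ (1/3) * dist x y := by linarith
    · rw [bump_zero hy, sub_zero, norm_zero]
      positivity

end Bump

section Phi

variable {d : ℕ} {σ : ℝ} {S : Set (EuclideanSpace ℝ (Fin d))}

/-- The bilipschitz homeomorphism moving each point of `S` to its rounding. -/
def phiMap (σ : ℝ) (S : Set (EuclideanSpace ℝ (Fin d))) (x : EuclideanSpace ℝ (Fin d)) :
    EuclideanSpace ℝ (Fin d) := x + bump σ S x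

lemma phi_bilip (hσ : 0 < σ) (hsep : ∀ a ∈ S, ∀ b ∈ S, a ≠ b → σ ≤ dist a b)
    (hv : ∀ a ∈ S, ‖latRound a - a‖ ≤ σ/6) :
    IsBilipOn 3 (phiMap σ S) Set.univ := by
  intro x _ y _
  have hl := bump_lip hσ hsep hv x y
  have e : (x + bump σ S x) - (y + bump σ S y) = (x - y) + (bump σ S x - bump σ S y) := by
    abel
  have hdist : dist (phiMap σ S x) (phiMap σ S y) =
      ‖(x - y) + (bump σ S x - bump σ S y)‖ := by
    rw [dist_eq_norm, phiMap, phiMap, e]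
  have hup : ‖(x - y) + (bump σ S x - bump σ S y)‖ ≤ ‖x - y‖ + ‖bump σ S x - bump σ S y‖ :=
    norm_add_le _ _
  have hlow : ‖x - y‖ - ‖bump σ S x - bump σ S y‖ ≤
      ‖(x - y) + (bump σ S x - bump σ S y)‖ := by
    have h := norm_sub_le ((x - y) + (bump σ S x - bump σ S y)) (bump σ S x - bump σ S y)
    rw [add_sub_cancel_right] at h
    linarith
  have hxy : ‖x - y‖ = dist x y := (dist_eq_norm x y).symm
  have hd0 : (0:ℝ) ≤ dist x y := dist_nonneg
  constructor
  · rw [hdist]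
    have : (3:ℝ)⁻¹ * dist x y ≤ dist x y - (1/3) * dist x y := by norm_num; linarith
    linarith
  · rw [hdist]
    linarith

lemma phi_injective (hσ : 0 < σ) (hsep : ∀ a ∈ S, ∀ b ∈ S, a ≠ b → σ ≤ dist a b)
    (hv : ∀ a ∈ S, ‖latRound a - a‖ ≤ σ/6) : Function.Injective (phiMap σ S) := by
  intro x y hxy
  have h := (phi_bilip hσ hsep hv x trivial y trivial).1
  rw [hxy, dist_self] at h
  have : dist x y ≤ 0 := by nlinarith
  exact dist_le_zero.mp this

lemma phi_surjective (hσ : 0 < σ) (hsep : ∀ a ∈ S, ∀ b ∈ S, a ≠ b → σ ≤ dist a b)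
    (hv : ∀ a ∈ S, ‖latRound a - a‖ ≤ σ/6) : Function.Surjective (phiMap σ S) := by
  intro y
  set T : EuclideanSpace ℝ (Fin d) → EuclideanSpace ℝ (Fin d) := fun x => y - bump σ S x with hT
  have hlip : LipschitzWith (⟨1/3, by norm_num⟩ : NNReal) T := by
    apply LipschitzWith.of_dist_le_mul
    intro a b
    have : dist (T a) (T b) = ‖bump σ S b - bump σ S a‖ := by
      rw [hT, dist_eq_norm]
      congr 1
      exact sub_sub_sub_cancel_left _ _ _
    rw [this]
    have := bump_lip hσ hsep hv b a
    rw [dist_comm b a] at this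
    calc ‖bump σ S b - bump σ S a‖ ≤ (1/3) * dist a b := this
      _ = (⟨1/3, by norm_num⟩ : NNReal) * dist a b := by rfl
  have hcontr : ContractingWith (⟨1/3, by norm_num⟩ : NNReal) T := by
    refine ⟨?_, hlip⟩
    apply NNReal.coe_lt_coe.1
    exact (show (1:ℝ)/3 < 1 by norm_num)
  have hfix := hcontr.fixedPoint_isFixedPt
  refine ⟨ContractingWith.fixedPoint T hcontr, ?_⟩
  have hx : y - bump σ S (ContractingWith.fixedPoint T hcontr) =
      ContractingWith.fixedPoint T hcontr := hfix
  show (ContractingWith.fixedPoint T hcontr) + bump σ S (ContractingWith.fixedPoint T hcontr) = y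
  set x0 := ContractingWith.fixedPoint T hcontr with hx0
  set b := bump σ S x0 with hbdef
  rw [← hx]
  abel

lemma phi_eq (hσ : 0 < σ) (hsep : ∀ a ∈ S, ∀ b ∈ S, a ≠ b → σ ≤ dist a b)
    {a : EuclideanSpace ℝ (Fin d)} (ha : a ∈ S) : phiMap σ S a = latRound a := by
  rw [phiMap, bump_eq hsep ha (by rw [dist_self]; linarith)]
  rw [dist_self]
  simp

end Phi

lemma net_r_le_2R {d : ℕ} (hd : 1 ≤ d) {A : Set (EuclideanSpace ℝ (Fin d))} {r R : ℝ}
    (hr : 0 < r)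
    (hsep : ∀ a ∈ A, ∀ b ∈ A, a ≠ b → r ≤ dist a b)
    (hnet : ∀ p : EuclideanSpace ℝ (Fin d), ∃ a ∈ A, dist p a ≤ R) : r ≤ 2 * R := by
  obtain ⟨a, ha, -⟩ := hnet 0
  set i0 : Fin d := ⟨0, hd⟩
  set p : EuclideanSpace ℝ (Fin d) := a + (r/2) • EuclideanSpace.single i0 (1:ℝ) with hp
  have hpa : dist p a = r/2 := by
    rw [dist_eq_norm, hp, add_sub_cancel_left, norm_smul, EuclideanSpace.norm_single]
    simp [Real.norm_eq_abs, abs_of_pos (show (0:ℝ) < r/2 by linarith)]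
    linarith
  obtain ⟨b, hb, hpb⟩ := hnet p
  by_cases hab : b = a
  · subst hab
    rw [hpa] at hpb
    linarith
  · have h1 := hsep b hb a ha hab
    have h2 := dist_triangle b p a
    rw [dist_comm b p] at h2
    linarith

set_option maxHeartbeats 1000000 in
lemma g_bilip_aux {d : ℕ} {A : Set (EuclideanSpace ℝ (Fin d))}
    (f Ψ az : EuclideanSpace ℝ (Fin d) → EuclideanSpace ℝ (Fin d)) (L r D0 T : ℝ)
    (q : ℝ) (hq0 : 0 < q) (hqr : q * r = D0)
    (hL : 1 ≤ L) (hr : 0 < r) (hD01 : 1 ≤ D0) (hT1 : 1 ≤ T) (hrD0 : r ≤ 2 * D0)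
    (hsep : ∀ a ∈ A, ∀ b ∈ A, a ≠ b → r ≤ dist a b)
    (hf : IsBilipOn L f A)
    (hΨ : IsBilipOn T Ψ Set.univ)
    (hazA : ∀ z, az z ∈ A)
    (hazD : ∀ z, dist z (Ψ (az z)) ≤ D0) :
    IsBilipOn (8 * L * (1 + 2 * D0) * (T + q))
      (fun z => f (az z) + (r / (4 * L * D0)) • (z - Ψ (az z))) (intLattice d) := by
  have hL0 : (0:ℝ) < L := by linarith
  have hD0pos : (0:ℝ) < D0 := by linarith
  have hT0 : (0:ℝ) < T := by linarith
  set ε : ℝ := r / (4 * L * D0) with hεdef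
  set Lg : ℝ := 8 * L * (1 + 2 * D0) * (T + q) with hLgdef
  set g : EuclideanSpace ℝ (Fin d) → EuclideanSpace ℝ (Fin d) :=
    fun z => f (az z) + ε • (z - Ψ (az z)) with hgdef
  have hεpos : 0 < ε := by rw [hεdef]; positivity
  have hε1 : ε ≤ 1 := by
    rw [hεdef, div_le_one (by positivity)]
    nlinarith
  have k0 : (1:ℝ) / 2 ≤ q := by
    nlinarith
  have hLg1 : 1 ≤ Lg := by
    have e1 : (1:ℝ) ≤ T + q := by linarith
    have e4 : (1:ℝ) ≤ 8 * L * (1 + 2 * D0) := by nlinarith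
    have e5 := mul_le_mul e4 e1 zero_le_one (by linarith : (0:ℝ) ≤ 8 * L * (1 + 2 * D0))
    rw [hLgdef]
    linarith
  have hLgpos : 0 < Lg := by linarith
  have hgdist : ∀ z, dist (g z) (f (az z)) ≤ ε * D0 := by
    intro z
    have e : g z = f (az z) + ε • (z - Ψ (az z)) := rfl
    rw [e, dist_eq_norm, add_sub_cancel_left, norm_smul, Real.norm_eq_abs, abs_of_pos hεpos]
    have e2 : ‖z - Ψ (az z)‖ = dist z (Ψ (az z)) := (dist_eq_norm _ _).symm
    rw [e2]
    exact mul_le_mul_of_nonneg_left (hazD z) hεpos.le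
  intro z hz w hw
  rcases eq_or_ne z w with rfl | hzw
  · simp [dist_self, mul_zero]
  · have hdzw : 1 ≤ dist z w := lattice_one_le_dist hz hw hzw
    have hdzw0 : 0 < dist z w := by linarith
    have h1g := hgdist z
    have h2g := hgdist w
    by_cases hab : az z = az w
    · have he : g z - g w = ε • (z - w) := by
        have e1 : g z = f (az z) + ε • (z - Ψ (az z)) := rfl
        have e2 : g w = f (az w) + ε • (w - Ψ (az w)) := rfl
        have e3 : (z - Ψ (az w)) - (w - Ψ (az w)) = z - w := by abel
        have e4 : (f (az w) + ε • (z - Ψ (az w))) - (f (az w) + ε • (w - Ψ (az w))) =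
            ε • (z - Ψ (az w)) - ε • (w - Ψ (az w)) := by abel
        rw [e1, e2, hab, e4, ← smul_sub, e3]
      have hdg : dist (g z) (g w) = ε * dist z w := by
        rw [dist_eq_norm, he, norm_smul, Real.norm_eq_abs, abs_of_pos hεpos, ← dist_eq_norm]
      have hεLg : 1 ≤ ε * Lg := by
        have e : ε * Lg = 2 * (1 + 2 * D0) * (r * T + r * q) / D0 := by
          rw [hεdef, hLgdef]
          field_simp
          ring
        rw [e, le_div_iff₀ hD0pos]
        nlinarith [mul_pos hr hT0, mul_pos hD0pos (mul_pos hr hT0), hqr]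
      constructor
      · rw [hdg]
        have h' : Lg⁻¹ ≤ ε := by
          have h1 : Lg⁻¹ * 1 ≤ Lg⁻¹ * (ε * Lg) :=
            mul_le_mul_of_nonneg_left hεLg (by positivity)
          have h2 : Lg⁻¹ * (ε * Lg) = ε := by field_simp
          rw [h2] at h1
          linarith
        exact mul_le_mul_of_nonneg_right h' dist_nonneg
      · rw [hdg]
        exact mul_le_mul_of_nonneg_right (le_trans hε1 hLg1) dist_nonneg
    · have haA := hazA z
      have hbA := hazA w
      have hdab : r ≤ dist (az z) (az w) := hsep _ haA _ hbA hab
      have hdab0 : 0 < dist (az z) (az w) := by linarith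
      obtain ⟨hfl, hfu⟩ := hf _ haA _ hbA
      obtain ⟨hΨl, hΨu⟩ := hΨ (az z) trivial (az w) trivial
      have hza := hazD z
      have hwb := hazD w
      have tri1 : dist (g z) (g w) ≤ dist (f (az z)) (f (az w)) + 2 * (ε * D0) := by
        have t := dist_triangle4 (g z) (f (az z)) (f (az w)) (g w)
        have e1 : dist (f (az w)) (g w) = dist (g w) (f (az w)) := dist_comm _ _
        linarith
      have tri2 : dist (f (az z)) (f (az w)) ≤ dist (g z) (g w) + 2 * (ε * D0) := by
        have t := dist_triangle4 (f (az z)) (g z) (g w) (f (az w))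
        have e1 : dist (f (az z)) (g z) = dist (g z) (f (az z)) := dist_comm _ _
        linarith
      have triΨ1 : dist (Ψ (az z)) (Ψ (az w)) ≤ dist z w + 2 * D0 := by
        have t := dist_triangle4 (Ψ (az z)) z w (Ψ (az w))
        have e1 : dist (Ψ (az z)) z = dist z (Ψ (az z)) := dist_comm _ _
        linarith
      have triΨ2 : dist z w ≤ dist (Ψ (az z)) (Ψ (az w)) + 2 * D0 := by
        have t := dist_triangle4 z (Ψ (az z)) (Ψ (az w)) w
        have e1 : dist (Ψ (az w)) w = dist w (Ψ (az w)) := dist_comm _ _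
        linarith
      have h2εD0 : 2 * (ε * D0) = r / (2 * L) := by
        rw [hεdef]
        field_simp
        ring
      have hdabL : dist (az z) (az w) / (2 * L) ≤ dist (g z) (g w) := by
        have e1 : L⁻¹ * dist (az z) (az w) = dist (az z) (az w) / L := by
          rw [inv_mul_eq_div]
        have e2 : r / (2 * L) ≤ dist (az z) (az w) / (2 * L) := by gcongr
        have e3 : dist (az z) (az w) / L =
            dist (az z) (az w) / (2 * L) + dist (az z) (az w) / (2 * L) := by
          field_simp
          ring
        rw [e1] at hfl
        linarith
      have hQ : dist z w ≤ (T + 2 * q) * dist (az z) (az w) := by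
        have t1 : 2 * D0 ≤ 2 * q * dist (az z) (az w) := by
          nlinarith [hqr, mul_le_mul_of_nonneg_left hdab hq0.le]
        nlinarith [triΨ2, hΨu, t1]
      constructor
      · rw [inv_mul_le_iff₀ hLgpos]
        have hQLg : 2 * L * (T + 2 * q) ≤ Lg := by
          rw [hLgdef]
          nlinarith [mul_pos hL0 hT0, mul_pos hL0 hq0,
            mul_pos (mul_pos hL0 hD0pos) hT0, mul_pos (mul_pos hL0 hD0pos) hq0]
        calc dist z w ≤ (T + 2 * q) * dist (az z) (az w) := hQ
          _ = 2 * L * (T + 2 * q) * (dist (az z) (az w) / (2 * L)) := by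
              field_simp
          _ ≤ Lg * dist (g z) (g w) := by
              apply mul_le_mul hQLg hdabL (by positivity) (by linarith)
      · have hdabT : dist (az z) (az w) ≤ T * dist (Ψ (az z)) (Ψ (az w)) := by
          rwa [inv_mul_le_iff₀ hT0] at hΨl
        have hup2 : dist (az z) (az w) ≤ T * (1 + 2 * D0) * dist z w := by
          have t : dist (Ψ (az z)) (Ψ (az w)) ≤ (1 + 2 * D0) * dist z w := by
            nlinarith [triΨ1]
          calc dist (az z) (az w) ≤ T * dist (Ψ (az z)) (Ψ (az w)) := hdabT
            _ ≤ T * ((1 + 2 * D0) * dist z w) := by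
                apply mul_le_mul_of_nonneg_left t hT0.le
            _ = T * (1 + 2 * D0) * dist z w := by ring
        have hr2L : r / (2 * L) ≤ D0 * dist z w := by
          have t : r / (2 * L) ≤ D0 := by
            rw [div_le_iff₀ (by positivity : (0:ℝ) < 2 * L)]
            nlinarith
          nlinarith
        have hfinal : T * L * (1 + 2 * D0) + D0 ≤ Lg := by
          rw [hLgdef]
          have k1 : (1 + 2 * D0) * (1 / 2) ≤ (1 + 2 * D0) * q :=
            mul_le_mul_of_nonneg_left k0 (by linarith)
          nlinarith [mul_pos (mul_pos hL0 hT0) hD0pos, mul_pos hL0 hq0,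
            mul_le_mul_of_nonneg_left k1 hL0.le,
            mul_pos hL0 (mul_pos hT0 hD0pos)]
        have hstep : dist (g z) (g w) ≤
            L * (T * (1 + 2 * D0) * dist z w) + D0 * dist z w := by
          have hh := mul_le_mul_of_nonneg_left hup2 hL0.le
          have hr2L' : 2 * (ε * D0) ≤ D0 * dist z w := by
            rw [h2εD0]
            exact hr2L
          linarith
        calc dist (g z) (g w) ≤ L * (T * (1 + 2 * D0) * dist z w) + D0 * dist z w := hstep
          _ = (T * L * (1 + 2 * D0) + D0) * dist z w := by ring
          _ ≤ Lg * dist z w := mul_le_mul_of_nonneg_right hfinal (by linarith)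

set_option maxHeartbeats 1000000 in
lemma arith_aux (L R r s m sq : ℝ) (hL : 1 ≤ L) (hR : 0 < R) (hr : 0 < r)
    (hs1 : 1 ≤ s) (hm1 : 1 ≤ m) (hsq1 : 1 ≤ sq) (hsm : s ≤ m)
    (h3sq : 3 * sq ≤ m * r) (h3mr : 3 ≤ m * r) (hr2R : r ≤ 2 * R) :
    8 * L * (1 + 2 * (s * R + sq)) * (3 * s + (s * R + sq) / r) ≤
      24 * sq * R ^ 2 * (16 * m) ^ 3 * L := by
  have hm0 : (0:ℝ) < m := by linarith
  have hs0 : (0:ℝ) < s := by linarith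
  have hL0 : (0:ℝ) < L := by linarith
  have hsq0 : (0:ℝ) < sq := by linarith
  have hx : 3 / 2 ≤ m * R := by nlinarith [mul_le_mul_of_nonneg_left hr2R hm0.le]
  have hks : s ≤ m ^ 2 * r / 3 := by
    nlinarith [mul_le_mul_of_nonneg_left h3mr hm0.le]
  have hsq_r : sq ≤ m * r / 3 := by linarith
  have hD0r : (s * R + sq) / r ≤ m ^ 2 * R / 3 + m / 3 := by
    rw [div_le_iff₀ hr]
    have h1 : s * R ≤ m ^ 2 * r / 3 * R := mul_le_mul_of_nonneg_right hks hR.le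
    nlinarith
  have hfac1 : 1 + 2 * (s * R + sq) ≤ sq * (3 + 2 * (m * R)) := by
    have h1 : s * R ≤ m * R := mul_le_mul_of_nonneg_right hsm hR.le
    have h2 : m * R ≤ sq * (m * R) := by nlinarith [mul_pos hm0 hR]
    nlinarith
  have hfac2 : 3 * s + (s * R + sq) / r ≤ m * (10 + m * R) / 3 := by
    nlinarith [hD0r]
  have ht1 : (0:ℝ) ≤ 3 * s + (s * R + sq) / r := by positivity
  have hLHS : 8 * L * (1 + 2 * (s * R + sq)) * (3 * s + (s * R + sq) / r) ≤
      8 * L * (sq * (3 + 2 * (m * R))) * (m * (10 + m * R) / 3) := by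
    apply mul_le_mul (mul_le_mul le_rfl hfac1 (by positivity) (by positivity)) hfac2 ht1
      (by positivity)
  have hxsq : (3 + 2 * (m * R)) * (10 + m * R) ≤ 31 * (m * R * (m * R)) := by
    nlinarith [hx]
  have hmid : 8 * L * (sq * (3 + 2 * (m * R))) * (m * (10 + m * R) / 3) =
      8 * L * sq * m * ((3 + 2 * (m * R)) * (10 + m * R)) / 3 := by ring
  have hmid2 : 8 * L * sq * m * ((3 + 2 * (m * R)) * (10 + m * R)) / 3 ≤
      8 * L * sq * m * (31 * (m * R * (m * R))) / 3 := by
    have hc : (0:ℝ) ≤ 8 * L * sq * m := by positivity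
    have := mul_le_mul_of_nonneg_left hxsq hc
    linarith
  have hfin : 8 * L * sq * m * (31 * (m * R * (m * R))) / 3 ≤
      24 * sq * R ^ 2 * (16 * m) ^ 3 * L := by
    have hp : (0:ℝ) < L * sq * (m * m * m) * (R * R) := by positivity
    nlinarith [hp]
  linarith [hLHS, hmid ▸ hmid2, hfin]

set_option maxHeartbeats 1000000 in
lemma reduction {d : ℕ} (hd : 1 ≤ d) (A : Set (EuclideanSpace ℝ (Fin d))) (r R : ℝ)
    (hr : 0 < r) (hR : 0 < R)
    (hsep : ∀ a ∈ A, ∀ b ∈ A, a ≠ b → r ≤ dist a b)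
    (hnet : ∀ p : EuclideanSpace ℝ (Fin d), ∃ a ∈ A, dist p a ≤ R)
    (f : EuclideanSpace ℝ (Fin d) → EuclideanSpace ℝ (Fin d)) (L : ℝ) (hL : 1 ≤ L)
    (hf : IsBilipOn L f A) :
    ∃ (Ψ g : EuclideanSpace ℝ (Fin d) → EuclideanSpace ℝ (Fin d)) (Lg : ℝ),
      Function.Bijective Ψ ∧ IsBilipOn (16 * max (3 * d / r) 1) Ψ Set.univ ∧
      (∀ a ∈ A, Ψ a ∈ intLattice d) ∧
      1 ≤ Lg ∧
      Lg ≤ 24 * Real.sqrt d * R ^ 2 * (16 * max (3 * d / r) 1) ^ 3 * L ∧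
      IsBilipOn Lg g (intLattice d) ∧
      (∀ a ∈ A, g (Ψ a) = f a) := by
  have hL0 : (0:ℝ) < L := by linarith
  set sq : ℝ := Real.sqrt d with hsqdef
  have hsq1 : 1 ≤ sq := Real.one_le_sqrt.2 (by exact_mod_cast hd)
  have hsq0 : 0 < sq := by linarith
  have hsqd : sq ≤ (d:ℝ) := by
    nlinarith [Real.sq_sqrt (show (0:ℝ) ≤ (d:ℝ) by positivity)]
  set s : ℝ := max (3 * sq / r) 1 with hsdef
  have hs1 : 1 ≤ s := le_max_right _ _
  have hs0 : 0 < s := by linarith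
  set m : ℝ := max (3 * (d:ℝ) / r) 1 with hmdef
  have hm1 : 1 ≤ m := le_max_right _ _
  have hsm : s ≤ m := by
    apply max_le_max _ le_rfl
    gcongr
  have hrm : 3 * (d:ℝ) ≤ m * r := by
    have := le_max_left (3 * (d:ℝ) / r) 1
    rw [div_le_iff₀ hr] at this
    linarith
  have h3mr : 3 ≤ m * r := by
    have : (1:ℝ) ≤ (d:ℝ) := by exact_mod_cast hd
    linarith
  set σ : ℝ := s * r with hσdef
  have hσ0 : 0 < σ := by positivity
  have hσ3 : 3 * sq ≤ σ := by
    rcases max_cases (3 * sq / r) 1 with ⟨heq, hge⟩ | ⟨heq, hlt⟩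
    · rw [hσdef, hsdef, heq, div_mul_cancel₀ _ (ne_of_gt hr)]
    · rw [hσdef, hsdef, heq, one_mul]
      rw [div_lt_one hr] at hlt
      linarith
  set A' : Set (EuclideanSpace ℝ (Fin d)) := (fun x => s • x) '' A with hA'def
  have hsep' : ∀ a ∈ A', ∀ b ∈ A', a ≠ b → σ ≤ dist a b := by
    rintro _ ⟨a, ha, rfl⟩ _ ⟨b, hb, rfl⟩ hne
    have hab : a ≠ b := by rintro rfl; exact hne rfl
    rw [dist_smul₀, Real.norm_eq_abs, abs_of_pos hs0]
    have := hsep a ha b hb hab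
    rw [hσdef]
    nlinarith
  have hv : ∀ a ∈ A', ‖latRound a - a‖ ≤ σ/6 := by
    intro a ha
    have h1 : dist a (latRound a) ≤ sq / 2 := dist_latRound_le a
    rw [dist_comm, dist_eq_norm] at h1
    linarith
  have hΦbilip : IsBilipOn 3 (phiMap σ A') Set.univ := phi_bilip hσ0 hsep' hv
  have hΦbij : Function.Bijective (phiMap σ A') :=
    ⟨phi_injective hσ0 hsep' hv, phi_surjective hσ0 hsep' hv⟩
  set Ψ : EuclideanSpace ℝ (Fin d) → EuclideanSpace ℝ (Fin d) :=
    fun x => phiMap σ A' (s • x) with hΨdef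
  have hsmul_bilip : IsBilipOn s (fun x : EuclideanSpace ℝ (Fin d) => s • x) Set.univ := by
    intro x _ y _
    rw [dist_smul₀, Real.norm_eq_abs, abs_of_pos hs0]
    constructor
    · have hsi : s⁻¹ ≤ s := by
        calc s⁻¹ ≤ 1 := by rw [inv_le_one_iff₀]; right; exact hs1
          _ ≤ s := hs1
      exact mul_le_mul_of_nonneg_right hsi dist_nonneg
    · exact le_rfl
  have hΨ3s : IsBilipOn (3 * s) Ψ Set.univ := by
    have := bilip_comp hΦbilip hsmul_bilip (by norm_num) hs0
    exact this
  have hΨbij : Function.Bijective Ψ := by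
    constructor
    · intro x y hxy
      have h := (hΨ3s x trivial y trivial).1
      rw [hΨdef] at hxy
      simp only at hxy
      have : dist (Ψ x) (Ψ y) = 0 := by rw [hΨdef]; simp only; rw [hxy, dist_self]
      rw [this] at h
      have h3s : (0:ℝ) < 3 * s := by positivity
      have : dist x y ≤ 0 := by
        by_contra hc
        push_neg at hc
        have := mul_pos (inv_pos.2 h3s) hc
        linarith
      exact dist_le_zero.mp this
    · intro y
      obtain ⟨u, hu⟩ := hΦbij.2 y
      exact ⟨s⁻¹ • u, by rw [hΨdef]; simp only; rw [smul_inv_smul₀ (ne_of_gt hs0), hu]⟩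
  have hΨlat : ∀ a ∈ A, Ψ a = latRound (s • a) := by
    intro a ha
    rw [hΨdef]
    simp only
    exact phi_eq hσ0 hsep' ⟨a, ha, rfl⟩
  have hΨmem : ∀ a ∈ A, Ψ a ∈ intLattice d := by
    intro a ha
    rw [hΨlat a ha]
    exact latRound_mem _
  set D0 : ℝ := s * R + sq with hD0def
  have hD0pos : 0 < D0 := by positivity
  have hD01 : 1 ≤ D0 := by nlinarith
  have hr2R : r ≤ 2 * R := net_r_le_2R hd hr hsep hnet
  have hRD0 : R ≤ D0 := by nlinarith
  have hrD0 : r ≤ 2 * D0 := by linarith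
  have hΨnear : ∀ z : EuclideanSpace ℝ (Fin d), ∃ a ∈ A, dist z (Ψ a) ≤ D0 := by
    intro z
    obtain ⟨a, ha, hza⟩ := hnet (s⁻¹ • z)
    refine ⟨a, ha, ?_⟩
    have h1 : dist z (s • a) ≤ s * R := by
      have : dist (s • (s⁻¹ • z)) (s • a) = s * dist (s⁻¹ • z) a := by
        rw [dist_smul₀, Real.norm_eq_abs, abs_of_pos hs0]
      rw [smul_inv_smul₀ (ne_of_gt hs0)] at this
      rw [this]
      nlinarith
    have h2 : dist (s • a) (Ψ a) ≤ sq := by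
      rw [hΨlat a ha]
      have := dist_latRound_le (s • a)
      linarith
    calc dist z (Ψ a) ≤ dist z (s • a) + dist (s • a) (Ψ a) := dist_triangle _ _ _
      _ ≤ s * R + sq := by linarith
      _ = D0 := hD0def.symm
  have hchoice : ∀ z : EuclideanSpace ℝ (Fin d),
      ∃ a, a ∈ A ∧ dist z (Ψ a) ≤ D0 ∧ (∀ b ∈ A, Ψ b = z → a = b) := by
    intro z
    by_cases h : ∃ b ∈ A, Ψ b = z
    · obtain ⟨b, hb, hbz⟩ := h
      refine ⟨b, hb, by rw [hbz]; simp [hD0pos.le], ?_⟩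
      intro b' hb' hb'z
      exact hΨbij.1 (by rw [hbz, hb'z])
    · obtain ⟨a, ha, hza⟩ := hΨnear z
      refine ⟨a, ha, hza, ?_⟩
      intro b hb hbz
      exact absurd ⟨b, hb, hbz⟩ h
  choose az hazA hazD hazU using hchoice
  have hq0 : 0 < D0 / r := by positivity
  have hqr : D0 / r * r = D0 := div_mul_cancel₀ _ (ne_of_gt hr)
  have hT1 : 1 ≤ 3 * s := by linarith
  set Lg : ℝ := 8 * L * (1 + 2 * D0) * (3 * s + D0 / r) with hLgdef
  have hLg1 : 1 ≤ Lg := by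
    have e1 : (1:ℝ) ≤ 3 * s + D0 / r := by linarith
    have e4 : (1:ℝ) ≤ 8 * L * (1 + 2 * D0) := by nlinarith
    have e5 := mul_le_mul e4 e1 zero_le_one (by linarith : (0:ℝ) ≤ 8 * L * (1 + 2 * D0))
    rw [hLgdef]
    linarith
  set g : EuclideanSpace ℝ (Fin d) → EuclideanSpace ℝ (Fin d) :=
    fun z => f (az z) + (r / (4 * L * D0)) • (z - Ψ (az z)) with hgdef
  have hgeq : ∀ a ∈ A, g (Ψ a) = f a := by
    intro a ha
    have h := hazU (Ψ a) a ha rfl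
    have e : g (Ψ a) = f (az (Ψ a)) + (r / (4 * L * D0)) • (Ψ a - Ψ (az (Ψ a))) := rfl
    rw [e, h]
    simp
  have hgbilip : IsBilipOn Lg g (intLattice d) :=
    g_bilip_aux f Ψ az L r D0 (3 * s) (D0 / r) hq0 hqr hL hr hD01 hT1 hrD0 hsep hf hΨ3s
      hazA hazD
  have hΨK : IsBilipOn (16 * max (3 * (d:ℝ) / r) 1) Ψ Set.univ := by
    apply bilip_mono hΨ3s (by positivity)
    rw [← hmdef]
    nlinarith
  have hLgT : Lg ≤ 24 * Real.sqrt d * R ^ 2 * (16 * max (3 * (d:ℝ) / r) 1) ^ 3 * L := by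
    rw [← hmdef, ← hsqdef, hLgdef, hD0def]
    have h3sq : 3 * sq ≤ m * r := by linarith
    exact arith_aux L R r s m sq hL hR hr hs1 hm1 hsq1 hsm h3sq h3mr hr2R
  exact ⟨Ψ, g, Lg, hΨbij, hΨK, hΨmem, hLg1, hLgT, hgbilip, hgeq⟩

theorem stmt_9 (d : ℕ) (hd : 1 ≤ d) :
    (ExtProp d (intLattice d) ↔
      ∀ (A : Set (EuclideanSpace ℝ (Fin d))) (r R : ℝ), 0 < r → 0 < R →
        (∀ a ∈ A, ∀ b ∈ A, a ≠ b → r ≤ dist a b) →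
        (∀ p : EuclideanSpace ℝ (Fin d), ∃ a ∈ A, dist p a ≤ R) →
        ExtProp d A) ∧
    (∀ C : ℝ → ℝ, MonotoneOn C (Set.Ici 1) → (∀ t : ℝ, 1 ≤ t → 1 ≤ C t) →
      (∀ (f : EuclideanSpace ℝ (Fin d) → EuclideanSpace ℝ (Fin d)) (L : ℝ), 1 ≤ L →
        IsBilipOn L f (intLattice d) →
        ∃ F, Function.Bijective F ∧ IsBilipOn (C L) F Set.univ ∧
          Set.EqOn F f (intLattice d)) →
      ∀ (A : Set (EuclideanSpace ℝ (Fin d))) (r R : ℝ), 0 < r → 0 < R →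
        (∀ a ∈ A, ∀ b ∈ A, a ≠ b → r ≤ dist a b) →
        (∀ p : EuclideanSpace ℝ (Fin d), ∃ a ∈ A, dist p a ≤ R) →
        ∀ (f : EuclideanSpace ℝ (Fin d) → EuclideanSpace ℝ (Fin d)) (L : ℝ), 1 ≤ L →
          IsBilipOn L f A →
          ∃ F, Function.Bijective F ∧
            IsBilipOn ((16 * max (3 * d / r) 1) *
              C (24 * Real.sqrt d * R ^ 2 * (16 * max (3 * d / r) 1) ^ 3 * L)) F Set.univ ∧
            Set.EqOn F f A) := by
  constructor
  · constructor
    · -- forward: lattice extension implies net extension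
      intro hlat A r R hr hR hsepA hnetA f ⟨L, hL, hf⟩
      obtain ⟨Ψ, g, Lg, hΨbij, hΨK, hΨmem, hLg1, _, hgbilip, hgeq⟩ :=
        reduction hd A r R hr hR hsepA hnetA f L hL hf
      obtain ⟨G, hGbij, ⟨L', hL', hG⟩, hGeq⟩ := hlat g ⟨Lg, hLg1, hgbilip⟩
      have hK1 : (1:ℝ) ≤ 16 * max (3 * (d:ℝ) / r) 1 := by
        have := le_max_right (3 * (d:ℝ) / r) 1
        linarith
      refine ⟨G ∘ Ψ, hGbij.comp hΨbij, ⟨L' * (16 * max (3 * (d:ℝ) / r) 1), ?_, ?_⟩, ?_⟩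
      · nlinarith
      · exact bilip_comp hG hΨK (by linarith) (by linarith)
      · intro a ha
        have e1 : (G ∘ Ψ) a = G (Ψ a) := rfl
        rw [e1, hGeq (hΨmem a ha), hgeq a ha]
    · -- backward: apply to the lattice itself
      intro h
      apply h (intLattice d) 1 (Real.sqrt d) one_pos
        (by rw [show (0:ℝ) = Real.sqrt 0 by simp]
            exact Real.sqrt_lt_sqrt le_rfl (by exact_mod_cast hd))
      · intro a ha b hb hab
        exact lattice_one_le_dist ha hb hab
      · intro p
        refine ⟨latRound p, latRound_mem p, ?_⟩
        have h1 := dist_latRound_le p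
        have h2 : (0:ℝ) ≤ Real.sqrt d := Real.sqrt_nonneg _
        linarith
  · -- quantitative version
    intro C hCmono hC1 hext A r R hr hR hsepA hnetA f L hL hf
    obtain ⟨Ψ, g, Lg, hΨbij, hΨK, hΨmem, hLg1, hLgT, hgbilip, hgeq⟩ :=
      reduction hd A r R hr hR hsepA hnetA f L hL hf
    obtain ⟨G, hGbij, hGbilip, hGeq⟩ := hext g Lg hLg1 hgbilip
    have hT1 : (1:ℝ) ≤ 24 * Real.sqrt d * R ^ 2 * (16 * max (3 * (d:ℝ) / r) 1) ^ 3 * L := by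
      linarith
    have hCLg1 : 1 ≤ C Lg := hC1 Lg hLg1
    have hCLgCT : C Lg ≤
        C (24 * Real.sqrt d * R ^ 2 * (16 * max (3 * (d:ℝ) / r) 1) ^ 3 * L) :=
      hCmono (Set.mem_Ici.2 hLg1) (Set.mem_Ici.2 hT1) hLgT
    have hGbilip' :
        IsBilipOn (C (24 * Real.sqrt d * R ^ 2 * (16 * max (3 * (d:ℝ) / r) 1) ^ 3 * L))
          G Set.univ := bilip_mono hGbilip (by linarith) hCLgCT
    have hK0 : (0:ℝ) < 16 * max (3 * (d:ℝ) / r) 1 := by positivity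
    have hcomp := bilip_comp hGbilip' hΨK (by linarith) hK0
    refine ⟨G ∘ Ψ, hGbij.comp hΨbij, ?_, ?_⟩
    · have e : C (24 * Real.sqrt d * R ^ 2 * (16 * max (3 * (d:ℝ) / r) 1) ^ 3 * L) *
          (16 * max (3 * (d:ℝ) / r) 1) =
          (16 * max (3 * (d:ℝ) / r) 1) *
          C (24 * Real.sqrt d * R ^ 2 * (16 * max (3 * (d:ℝ) / r) 1) ^ 3 * L) :=
        mul_comm _ _
      rw [e] at hcomp
      exact hcomp
    · intro a ha
      have e1 : (G ∘ Ψ) a = G (Ψ a) := rfl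
      rw [e1, hGeq (hΨmem a ha), hgeq a ha]
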